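/- The norm of the gradient map is nonincreasing along a gradient step: for every x ∈ K*, ‖∇⁺d(x⁺)‖ ≤ ‖∇⁺d(x)‖, where x⁺ = [x + (1/L_d) ∇d(x)]_{K*}. -/

import Mathlib

open scoped RealInnerProductSpace


private lemma sqSub {p : ℕ} (e q : EuclideanSpace ℝ (Fin p)) (s : ℝ) :
    ‖e - s • q‖ ^ 2 = ‖e‖ ^ 2 - 2 * s * ⟪e, q⟫ + s ^ 2 * ‖q‖ ^ 2 := by
  rw [norm_sub_sq_real, real_inner_smul_right, norm_smul, Real.norm_eq_abs, mul_pow, sq_abs]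
  ring

private lemma sqAdd {p : ℕ} (w v : EuclideanSpace ℝ (Fin p)) (c : ℝ) :
    ‖w + c • v‖ ^ 2 = ‖w‖ ^ 2 + 2 * c * ⟪w, v⟫ + c ^ 2 * ‖v‖ ^ 2 := by
  rw [norm_add_sq_real, real_inner_smul_right, norm_smul, Real.norm_eq_abs, mul_pow, sq_abs]
  ring

private lemma innerD {p : ℕ} (z y a b : EuclideanSpace ℝ (Fin p)) :
    ⟪z - y, a - b⟫ = ⟪z, a⟫ - ⟪z, b⟫ - ⟪y, a⟫ + ⟪y, b⟫ := by
  simp only [inner_sub_left, inner_sub_right]; ring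

private lemma VIaux {p : ℕ} {S : Set (EuclideanSpace ℝ (Fin p))} (hS : Convex ℝ S)
    (z P : EuclideanSpace ℝ (Fin p)) (hP : P ∈ S)
    (hmin : ∀ w ∈ S, ‖z - P‖ ≤ ‖z - w‖) :
    ∀ w ∈ S, ⟪z - P, w - P⟫ ≤ 0 := by
  intro w hw
  by_contra hcon
  push_neg at hcon
  have hq0 : w - P ≠ 0 := by
    intro h
    rw [h, inner_zero_right] at hcon
    exact lt_irrefl _ hcon
  have hqpos : (0:ℝ) < ‖w - P‖ ^ 2 := pow_pos (norm_pos_iff.mpr hq0) 2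
  set s : ℝ := min 1 (⟪z - P, w - P⟫ / ‖w - P‖ ^ 2) with hsdef
  have hspos : 0 < s := lt_min one_pos (div_pos hcon hqpos)
  have hs1 : s ≤ 1 := min_le_left _ _
  have hmem : P + s • (w - P) ∈ S := by
    have hco : P + s • (w - P) = (1 - s) • P + s • w := by module
    rw [hco]
    exact hS hP hw (by linarith) hspos.le (by ring)
  have hdist := hmin _ hmem
  have hEq : z - (P + s • (w - P)) = (z - P) - s • (w - P) := by abel
  rw [hEq] at hdist
  have hsq : ‖z - P‖ ^ 2 ≤ ‖(z - P) - s • (w - P)‖ ^ 2 := by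
    nlinarith [norm_nonneg ((z - P) - s • (w - P)), norm_nonneg (z - P)]
  rw [sqSub] at hsq
  have hsQ : s * ‖w - P‖ ^ 2 ≤ ⟪z - P, w - P⟫ := by
    have h2 : s ≤ ⟪z - P, w - P⟫ / ‖w - P‖ ^ 2 := min_le_right _ _
    calc s * ‖w - P‖ ^ 2 ≤ (⟪z - P, w - P⟫ / ‖w - P‖ ^ 2) * ‖w - P‖ ^ 2 := by nlinarith
      _ = ⟪z - P, w - P⟫ := by field_simp
  nlinarith [mul_le_mul_of_nonneg_left hsQ hspos.le, mul_pos hspos hcon]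

set_option maxHeartbeats 1000000 in
theorem stmt_2 {n p : ℕ}
    (f : EuclideanSpace ℝ (Fin n) → ℝ) (σf : ℝ) (hσf : 0 < σf)
    (hfc : Continuous f) (hfsc : StrongConvexOn Set.univ σf f)
    (U : Set (EuclideanSpace ℝ (Fin n))) (hUne : U.Nonempty) (hUcl : IsClosed U) (hUcv : Convex ℝ U)
    (G : EuclideanSpace ℝ (Fin n) →L[ℝ] EuclideanSpace ℝ (Fin p)) (hG : G ≠ 0) (g : EuclideanSpace ℝ (Fin p))
    (K : Set (EuclideanSpace ℝ (Fin p))) (hKne : K.Nonempty) (hKcl : IsClosed K) (hKcv : Convex ℝ K)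
    (hKcone : ∀ c : ℝ, 0 ≤ c → ∀ v ∈ K, c • v ∈ K)
    (Kstar : Set (EuclideanSpace ℝ (Fin p)))
    (hKstar : Kstar = {x : EuclideanSpace ℝ (Fin p) | ∀ v ∈ K, 0 ≤ ⟪x, v⟫})
    (Lag : EuclideanSpace ℝ (Fin n) → EuclideanSpace ℝ (Fin p) → ℝ)
    (hLag : ∀ u x, Lag u x = f u + ⟪x, -(G u) - g⟫)
    (uu : EuclideanSpace ℝ (Fin p) → EuclideanSpace ℝ (Fin n))
    (huu : ∀ x : EuclideanSpace ℝ (Fin p), uu x ∈ U ∧ ∀ u ∈ U, Lag (uu x) x ≤ Lag u x)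
    (d : EuclideanSpace ℝ (Fin p) → ℝ) (hd : ∀ x, d x = Lag (uu x) x)
    (ustar : EuclideanSpace ℝ (Fin n))
    (hustar : ustar ∈ U ∧ G ustar + g ∈ K ∧ ∀ u ∈ U, G u + g ∈ K → f ustar ≤ f u)
    (fstar : ℝ) (hfstar : fstar = f ustar)
    (Xstar : Set (EuclideanSpace ℝ (Fin p))) (hXstar : Xstar = {x ∈ Kstar | d x = fstar})
    (hXne : Xstar.Nonempty)
    (Ld : ℝ) (hLd : Ld = ‖G‖ ^ 2 / σf)
    (projKs : EuclideanSpace ℝ (Fin p) → EuclideanSpace ℝ (Fin p))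
    (hprojKs : ∀ z : EuclideanSpace ℝ (Fin p), projKs z ∈ Kstar ∧ ∀ w ∈ Kstar, ‖z - projKs z‖ ≤ ‖z - w‖)
    (gmap : EuclideanSpace ℝ (Fin p) → EuclideanSpace ℝ (Fin p))
    (hgmap : ∀ z : EuclideanSpace ℝ (Fin p), gmap z = projKs (z + (1 / Ld) • (-(G (uu z)) - g)) - z)
 :
    ∀ x ∈ Kstar,
      ‖gmap (projKs (x + (1 / Ld) • (-(G (uu x)) - g)))‖ ≤ ‖gmap x‖ := by
  intro x hx
  have hGnorm : (0:ℝ) < ‖G‖ := norm_pos_iff.mpr hG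
  have hLdpos : 0 < Ld := by rw [hLd]; exact div_pos (pow_pos hGnorm 2) hσf
  -- Kstar is convex
  have hKscv : Convex ℝ Kstar := by
    rw [hKstar]
    intro a ha b hb s t hs ht hst v hv
    simp only [Set.mem_setOf_eq] at ha hb ⊢
    have h1 := ha v hv
    have h2 := hb v hv
    rw [inner_add_left, real_inner_smul_left, real_inner_smul_left]
    nlinarith
  have hVI : ∀ z : EuclideanSpace ℝ (Fin p), ∀ w ∈ Kstar,
      ⟪z - projKs z, w - projKs z⟫ ≤ 0 := fun z =>
    VIaux hKscv z (projKs z) (hprojKs z).1 (hprojKs z).2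
  -- projection is nonexpansive
  have hnonexp : ∀ z w : EuclideanSpace ℝ (Fin p),
      ‖projKs z - projKs w‖ ≤ ‖z - w‖ := by
    intro z w
    have h1 := hVI z (projKs w) (hprojKs w).1
    have h2 := hVI w (projKs z) (hprojKs z).1
    rw [innerD] at h1 h2
    have hkey : ‖projKs z - projKs w‖ ^ 2 ≤ ⟪z - w, projKs z - projKs w⟫ := by
      rw [innerD, norm_sub_sq_real]
      have hc : ⟪projKs w, projKs z⟫ = ⟪projKs z, projKs w⟫ := real_inner_comm _ _
      have hsz : ⟪projKs z, projKs z⟫ = ‖projKs z‖ ^ 2 := real_inner_self_eq_norm_sq _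
      have hsw : ⟪projKs w, projKs w⟫ = ‖projKs w‖ ^ 2 := real_inner_self_eq_norm_sq _
      linarith
    have hcs : ⟪z - w, projKs z - projKs w⟫ ≤ ‖z - w‖ * ‖projKs z - projKs w‖ :=
      real_inner_le_norm _ _
    rcases eq_or_lt_of_le (norm_nonneg (projKs z - projKs w)) with h0 | h0
    · rw [← h0]; exact norm_nonneg _
    · nlinarith
  -- quadratic growth of Lag at its minimizer
  have hgrowth : ∀ x' : EuclideanSpace ℝ (Fin p), ∀ u ∈ U,
      Lag (uu x') x' + σf / 4 * ‖uu x' - u‖ ^ 2 ≤ Lag u x' := by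
    intro x' u hu
    set m := (1/2 : ℝ) • uu x' + (1/2 : ℝ) • u with hm
    have hmU : m ∈ U := hUcv (huu x').1 hu (by norm_num) (by norm_num) (by norm_num)
    have hfm : f m ≤ (1/2 : ℝ) • f (uu x') + (1/2 : ℝ) • f u
        - (1/2 : ℝ) * (1/2 : ℝ) * (σf / 2 * ‖uu x' - u‖ ^ 2) :=
      hfsc.2 (Set.mem_univ _) (Set.mem_univ _) (by norm_num) (by norm_num) (by norm_num)
    have hGm : -(G m) - g = (1/2 : ℝ) • (-(G (uu x')) - g) + (1/2 : ℝ) • (-(G u) - g) := by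
      rw [hm, map_add, map_smul, map_smul]; module
    have hinm : ⟪x', -(G m) - g⟫
        = (1/2 : ℝ) * ⟪x', -(G (uu x')) - g⟫ + (1/2 : ℝ) * ⟪x', -(G u) - g⟫ := by
      rw [hGm, inner_add_right, real_inner_smul_right, real_inner_smul_right]
    have hmin := (huu x').2 m hmU
    rw [hLag m x', hLag (uu x') x'] at hmin
    rw [hLag (uu x') x', hLag u x']
    rw [hinm] at hmin
    simp only [smul_eq_mul] at hfm
    nlinarith
  -- cocoercivity
  have hcoco : ∀ y z : EuclideanSpace ℝ (Fin p),
      ‖(-(G (uu y)) - g) - (-(G (uu z)) - g)‖ ^ 2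
        ≤ 2 * Ld * ⟪z - y, (-(G (uu y)) - g) - (-(G (uu z)) - g)⟫ := by
    intro y z
    have h1 := hgrowth y (uu z) (huu z).1
    have h2 := hgrowth z (uu y) (huu y).1
    rw [hLag (uu y) y, hLag (uu z) y] at h1
    rw [hLag (uu z) z, hLag (uu y) z] at h2
    rw [norm_sub_rev (uu z) (uu y)] at h2
    have hmono : σf / 2 * ‖uu y - uu z‖ ^ 2
        ≤ ⟪z - y, (-(G (uu y)) - g) - (-(G (uu z)) - g)⟫ := by
      rw [innerD]
      linarith
    have hdiff : (-(G (uu y)) - g) - (-(G (uu z)) - g) = G (uu z - uu y) := by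
      rw [map_sub]; abel
    have hbound : ‖(-(G (uu y)) - g) - (-(G (uu z)) - g)‖ ≤ ‖G‖ * ‖uu y - uu z‖ := by
      rw [hdiff]
      calc ‖G (uu z - uu y)‖ ≤ ‖G‖ * ‖uu z - uu y‖ := G.le_opNorm _
        _ = ‖G‖ * ‖uu y - uu z‖ := by rw [norm_sub_rev]
    have hsq : ‖(-(G (uu y)) - g) - (-(G (uu z)) - g)‖ ^ 2
        ≤ ‖G‖ ^ 2 * ‖uu y - uu z‖ ^ 2 := by
      nlinarith [norm_nonneg ((-(G (uu y)) - g) - (-(G (uu z)) - g)),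
        mul_nonneg (norm_nonneg (G : EuclideanSpace ℝ (Fin n) →L[ℝ] EuclideanSpace ℝ (Fin p)))
          (norm_nonneg (uu y - uu z))]
    have hLdsig : ‖G‖ ^ 2 = Ld * σf := by rw [hLd]; field_simp
    have hmul := mul_le_mul_of_nonneg_left hmono (by positivity : (0:ℝ) ≤ 2 * Ld)
    rw [hLdsig] at hsq
    nlinarith
  -- the step map is nonexpansive
  have hstep : ∀ y z : EuclideanSpace ℝ (Fin p),
      ‖(y + (1 / Ld) • (-(G (uu y)) - g)) - (z + (1 / Ld) • (-(G (uu z)) - g))‖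
        ≤ ‖y - z‖ := by
    intro y z
    have hco := hcoco y z
    have hrw : (y + (1 / Ld) • (-(G (uu y)) - g)) - (z + (1 / Ld) • (-(G (uu z)) - g))
        = (y - z) + (1 / Ld) • ((-(G (uu y)) - g) - (-(G (uu z)) - g)) := by
      rw [smul_sub]; module
    rw [hrw]
    have hexp := sqAdd (y - z) ((-(G (uu y)) - g) - (-(G (uu z)) - g)) (1 / Ld)
    have hzy : ⟪z - y, (-(G (uu y)) - g) - (-(G (uu z)) - g)⟫
        = - ⟪y - z, (-(G (uu y)) - g) - (-(G (uu z)) - g)⟫ := by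
      rw [← inner_neg_left, neg_sub]
    rw [hzy] at hco
    have hfld : (1 / Ld) ^ 2 * (2 * Ld * (- ⟪y - z, (-(G (uu y)) - g) - (-(G (uu z)) - g)⟫))
        = - (2 * (1 / Ld) * ⟪y - z, (-(G (uu y)) - g) - (-(G (uu z)) - g)⟫) := by
      field_simp
    have hmul := mul_le_mul_of_nonneg_left hco
      (by positivity : (0:ℝ) ≤ (1 / Ld) ^ 2)
    rw [hfld] at hmul
    have hsq : ‖(y - z) + (1 / Ld) • ((-(G (uu y)) - g) - (-(G (uu z)) - g))‖ ^ 2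
        ≤ ‖y - z‖ ^ 2 := by
      rw [hexp]; linarith
    nlinarith [norm_nonneg ((y - z) + (1 / Ld) • ((-(G (uu y)) - g) - (-(G (uu z)) - g))),
      norm_nonneg (y - z)]
  -- conclude
  rw [hgmap (projKs (x + (1 / Ld) • (-(G (uu x)) - g))), hgmap x]
  exact le_trans
    (hnonexp (projKs (x + (1 / Ld) • (-(G (uu x)) - g))
        + (1 / Ld) • (-(G (uu (projKs (x + (1 / Ld) • (-(G (uu x)) - g))))) - g))
      (x + (1 / Ld) • (-(G (uu x)) - g)))
    (hstep (projKs (x + (1 / Ld) • (-(G (uu x)) - g))) x)
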